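/- Let p ≥ 5 be prime and n ≥ 1. Every element of (ℤ/pⁿℤ)ˣ/±1 can be connected to 1 via the following moves: for x, y ∈ (ℤ/pⁿℤ)ˣ with x+y (or x−y) a unit, the element [x]+[y]+[x±y] lies in the allowed subgroup; concretely, the subgroup of ℤ[(ℤ/pⁿℤ)ˣ/±1] generated by the elements [x]+[y]+[x+y] (for x, y, x+y all units) contains [u]−[v] for all units u, v and contains 3·[1]. Consequently this subgroup is exactly the set of elements of degree divisible by 3. -/

import Mathlib

namespace Stmt9

variable (p n : ℕ)

/-- The quotient `(ℤ/pⁿℤ)ˣ/±1`. -/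
abbrev Q : Type := (ZMod (p ^ n))ˣ ⧸ Subgroup.zpowers (-1 : (ZMod (p ^ n))ˣ)

/-- The class of a unit in `(ℤ/pⁿℤ)ˣ/±1`. -/
abbrev cls (u : (ZMod (p ^ n))ˣ) : Q p n := QuotientGroup.mk u

/-- The subgroup of `ℤ[(ℤ/pⁿℤ)ˣ/±1]` generated by the elements `[x]+[y]+[x+y]` for
units `x, y` with `x+y` a unit. -/
def A : AddSubgroup (FreeAbelianGroup (Q p n)) :=
  AddSubgroup.closure
    {z | ∃ u v w : (ZMod (p ^ n))ˣ, (w : ZMod (p ^ n)) = (u : ZMod (p ^ n)) + v ∧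
      z = FreeAbelianGroup.of (cls p n u) + FreeAbelianGroup.of (cls p n v) +
        FreeAbelianGroup.of (cls p n w)}

/-- The degree map `ℤ[(ℤ/pⁿℤ)ˣ/±1] → ℤ`, `Σ n_x [x] ↦ Σ n_x`. -/
def deg : FreeAbelianGroup (Q p n) →+ ℤ := FreeAbelianGroup.lift (fun _ => (1 : ℤ))

/-- For `p ≥ 5` prime and `n ≥ 1`, the subgroup of `ℤ[(ℤ/pⁿℤ)ˣ/±1]`
generated by the elements `[x]+[y]+[x+y]` (for `x`, `y`, `x+y` all units) contains
`[u]−[v]` for all units `u, v`, contains `3·[1]`, and is exactly the set of elements of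
degree divisible by `3`. -/
lemma cls_neg (u : (ZMod (p ^ n))ˣ) : cls p n (-u) = cls p n u := by
  refine (QuotientGroup.eq).mpr ⟨1, ?_⟩
  simp

lemma gen_mem (u v w : (ZMod (p ^ n))ˣ) (h : (w : ZMod (p ^ n)) = (u : ZMod (p ^ n)) + v) :
    FreeAbelianGroup.of (cls p n u) + FreeAbelianGroup.of (cls p n v) +
      FreeAbelianGroup.of (cls p n w) ∈ A p n :=
  AddSubgroup.subset_closure ⟨u, v, w, h, rfl⟩

lemma nat_unit (hp : p.Prime) (k : ℕ) (hk1 : 1 ≤ k) (hkp : k < p) :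
    IsUnit ((k : ℕ) : ZMod (p ^ n)) := by
  rw [ZMod.isUnit_iff_coprime]
  refine Nat.Coprime.pow_right n ?_
  exact (hp.coprime_iff_not_dvd.mpr (fun h => absurd (Nat.le_of_dvd (by omega) h) (by omega))).symm

lemma two_unit (hp : p.Prime) (hp5 : 5 ≤ p) : IsUnit (2 : ZMod (p ^ n)) := by
  have := nat_unit p n hp 2 (by omega) (by omega)
  simpa using this

lemma isUnit_iff (hp : p.Prime) (hn : 1 ≤ n) (x : ZMod (p ^ n)) :
    IsUnit x ↔ (ZMod.castHom (dvd_pow_self p (by omega : n ≠ 0)) (ZMod p) x ≠ 0) := by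
  haveI : Fact p.Prime := ⟨hp⟩
  haveI : NeZero (p ^ n) := ⟨pow_ne_zero n hp.pos.ne'⟩
  have hcast : ZMod.castHom (dvd_pow_self p (by omega : n ≠ 0)) (ZMod p) x
      = ((x.val : ℕ) : ZMod p) := by
    rw [ZMod.castHom_apply, ← ZMod.natCast_val]
  constructor
  · intro h h0
    exact (h.map (ZMod.castHom _ (ZMod p))).ne_zero h0
  · intro h
    rw [hcast, Ne, ZMod.natCast_eq_zero_iff] at h
    rw [← ZMod.natCast_zmod_val x, ZMod.isUnit_iff_coprime]
    exact Nat.Coprime.pow_right n ((hp.coprime_iff_not_dvd.mpr h).symm)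


lemma diff_mem (hp : p.Prime) (hp5 : 5 ≤ p) (u v : (ZMod (p ^ n))ˣ)
    (hs : IsUnit ((u : ZMod (p ^ n)) + v)) (ht : IsUnit ((u : ZMod (p ^ n)) - v)) :
    FreeAbelianGroup.of (cls p n u) - FreeAbelianGroup.of (cls p n v) ∈ A p n := by
  have h2 : IsUnit (2 : ZMod (p ^ n)) := two_unit p n hp hp5
  obtain ⟨a, ha2⟩ : ∃ a : (ZMod (p ^ n))ˣ,
      (2 : ZMod (p ^ n)) * a = (u : ZMod (p ^ n)) + v :=
    ⟨h2.unit⁻¹ * hs.unit, by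
      have h21 := Units.mul_inv h2.unit
      rw [h2.unit_spec] at h21
      rw [Units.val_mul, ← mul_assoc, h21, one_mul, hs.unit_spec]⟩
  obtain ⟨b, hb2⟩ : ∃ b : (ZMod (p ^ n))ˣ,
      (2 : ZMod (p ^ n)) * b = (u : ZMod (p ^ n)) - v :=
    ⟨h2.unit⁻¹ * ht.unit, by
      have h21 := Units.mul_inv h2.unit
      rw [h2.unit_spec] at h21
      rw [Units.val_mul, ← mul_assoc, h21, one_mul, ht.unit_spec]⟩
  have ha : (u : ZMod (p ^ n)) = (a : ZMod (p ^ n)) + b := by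
    refine h2.mul_left_cancel ?_
    rw [mul_add, ha2, hb2]; ring
  have hbv : (v : ZMod (p ^ n)) = (a : ZMod (p ^ n)) + ((-b : (ZMod (p ^ n))ˣ) : ZMod (p ^ n)) := by
    have hnb : ((-b : (ZMod (p ^ n))ˣ) : ZMod (p ^ n)) = -(b : ZMod (p ^ n)) := by simp
    rw [hnb]
    refine h2.mul_left_cancel ?_
    rw [mul_add, mul_neg, ha2, hb2]; ring
  have g1 := gen_mem p n a b u ha
  have g2 := gen_mem p n a (-b) v hbv
  rw [cls_neg] at g2
  have h3 := (A p n).sub_mem g1 g2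
  have he : FreeAbelianGroup.of (cls p n u) - FreeAbelianGroup.of (cls p n v) =
      (FreeAbelianGroup.of (cls p n a) + FreeAbelianGroup.of (cls p n b) +
        FreeAbelianGroup.of (cls p n u)) -
      (FreeAbelianGroup.of (cls p n a) + FreeAbelianGroup.of (cls p n b) +
        FreeAbelianGroup.of (cls p n v)) := by abel
  rw [he]; exact h3



lemma diff_mem' (hp : p.Prime) (hp5 : 5 ≤ p) (hn : 1 ≤ n) (u v : (ZMod (p ^ n))ˣ) :
    FreeAbelianGroup.of (cls p n u) - FreeAbelianGroup.of (cls p n v) ∈ A p n := by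
  haveI : Fact p.Prime := ⟨hp⟩
  have hn0 : n ≠ 0 := by omega
  set π : ZMod (p ^ n) →+* ZMod p := ZMod.castHom (dvd_pow_self p hn0) (ZMod p) with hπ
  have hcrit : ∀ x : ZMod (p ^ n), IsUnit x ↔ π x ≠ 0 := isUnit_iff p n hp hn
  have hπu : π u ≠ 0 := (hcrit _).mp u.isUnit
  have hπv : π v ≠ 0 := (hcrit _).mp v.isUnit
  have h3p : (3 : ZMod p) ≠ 0 := by
    have h3 : ((3 : ℕ) : ZMod p) ≠ 0 := by
      rw [Ne, ZMod.natCast_eq_zero_iff]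
      intro h
      have := Nat.le_of_dvd (by norm_num) h
      omega
    simpa using h3
  have hπ2 : π (2 : ZMod (p ^ n)) = 2 := map_ofNat π 2
  have h2u : IsUnit (2 : ZMod (p ^ n)) := two_unit p n hp hp5
  set w : (ZMod (p ^ n))ˣ := h2u.unit * v with hw_def
  have hw : (w : ZMod (p ^ n)) = 2 * (v : ZMod (p ^ n)) := by
    rw [hw_def, Units.val_mul, h2u.unit_spec]
  have hπw : π w = 2 * π v := by rw [hw, map_mul, hπ2]
  have hwv : FreeAbelianGroup.of (cls p n w) - FreeAbelianGroup.of (cls p n v) ∈ A p n := by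
    refine diff_mem p n hp hp5 w v ((hcrit _).mpr ?_) ((hcrit _).mpr ?_)
    · rw [map_add, hπw]
      intro h0
      refine mul_ne_zero h3p hπv ?_
      rw [← h0]; ring
    · rw [map_sub, hπw]
      intro h0
      refine hπv ?_
      rw [← h0]; ring
  by_cases h1 : π ((u : ZMod (p ^ n)) + v) = 0
  · -- π u = - π v
    have huv : π u = -π v := by
      have := h1
      rw [map_add] at this
      linear_combination this
    have huw : FreeAbelianGroup.of (cls p n u) - FreeAbelianGroup.of (cls p n w) ∈ A p n := by
      refine diff_mem p n hp hp5 u w ((hcrit _).mpr ?_) ((hcrit _).mpr ?_)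
      · rw [map_add, hπw, huv]
        intro h0
        refine hπv ?_
        rw [← h0]; ring
      · rw [map_sub, hπw, huv]
        intro h0
        refine mul_ne_zero h3p hπv ?_
        rw [← neg_eq_zero, ← h0]; ring
    have := (A p n).add_mem huw hwv
    rwa [sub_add_sub_cancel] at this
  by_cases h2 : π ((u : ZMod (p ^ n)) - v) = 0
  · -- π u = π v
    have huv : π u = π v := by
      have := h2
      rw [map_sub] at this
      linear_combination this
    have huw : FreeAbelianGroup.of (cls p n u) - FreeAbelianGroup.of (cls p n w) ∈ A p n := by
      refine diff_mem p n hp hp5 u w ((hcrit _).mpr ?_) ((hcrit _).mpr ?_)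
      · rw [map_add, hπw, huv]
        intro h0
        refine mul_ne_zero h3p hπv ?_
        rw [← h0]; ring
      · rw [map_sub, hπw, huv]
        intro h0
        refine hπv ?_
        rw [← neg_eq_zero, ← h0]; ring
    have := (A p n).add_mem huw hwv
    rwa [sub_add_sub_cancel] at this
  · exact diff_mem p n hp hp5 u v ((hcrit _).mpr h1) ((hcrit _).mpr h2)

lemma deg_of (x : Q p n) : deg p n (FreeAbelianGroup.of x) = 1 :=
  FreeAbelianGroup.lift_apply_of _ _

lemma three_mem (hp : p.Prime) (hp5 : 5 ≤ p) (hn : 1 ≤ n) :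
    (3 : ℤ) • FreeAbelianGroup.of (cls p n 1) ∈ A p n := by
  have h2u : IsUnit (2 : ZMod (p ^ n)) := two_unit p n hp hp5
  have hg : ((h2u.unit : (ZMod (p ^ n))ˣ) : ZMod (p ^ n)) =
      ((1 : (ZMod (p ^ n))ˣ) : ZMod (p ^ n)) + ((1 : (ZMod (p ^ n))ˣ) : ZMod (p ^ n)) := by
    rw [h2u.unit_spec]; norm_num
  have g := gen_mem p n 1 1 h2u.unit hg
  have d := diff_mem' p n hp hp5 hn h2u.unit 1
  have := (A p n).sub_mem g d
  have he : (3 : ℤ) • FreeAbelianGroup.of (cls p n 1) =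
      (FreeAbelianGroup.of (cls p n 1) + FreeAbelianGroup.of (cls p n 1) +
        FreeAbelianGroup.of (cls p n h2u.unit)) -
      (FreeAbelianGroup.of (cls p n h2u.unit) - FreeAbelianGroup.of (cls p n 1)) := by
    abel
  rwa [he]

theorem stmt_9 (hp : p.Prime) (hp5 : 5 ≤ p) (hn : 1 ≤ n) :
    (∀ u v : (ZMod (p ^ n))ˣ,
        FreeAbelianGroup.of (cls p n u) - FreeAbelianGroup.of (cls p n v) ∈ A p n) ∧
    (3 : ℤ) • FreeAbelianGroup.of (cls p n 1) ∈ A p n ∧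
    ∀ z : FreeAbelianGroup (Q p n), z ∈ A p n ↔ (3 : ℤ) ∣ deg p n z := by
  refine ⟨diff_mem' p n hp hp5 hn, three_mem p n hp hp5 hn, fun z => ⟨?_, ?_⟩⟩
  · intro hz
    have hle : A p n ≤ (AddSubgroup.zmultiples (3 : ℤ)).comap (deg p n) := by
      refine AddSubgroup.closure_le _ |>.mpr ?_
      rintro z ⟨u, v, w, hw, rfl⟩
      simp only [SetLike.mem_coe, AddSubgroup.mem_comap, map_add, deg_of]
      exact ⟨1, by norm_num⟩
    obtain ⟨k, hk⟩ := AddSubgroup.mem_zmultiples_iff.mp (hle hz)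
    exact ⟨k, by rw [← hk, smul_eq_mul]; ring⟩
  · intro hdvd
    have hP : ∀ z : FreeAbelianGroup (Q p n),
        z - (deg p n z) • FreeAbelianGroup.of (cls p n 1) ∈ A p n := by
      intro z
      induction z using FreeAbelianGroup.induction_on with
      | zero => simpa using (A p n).zero_mem
      | of x =>
        induction x using QuotientGroup.induction_on with
        | H u => simpa [deg_of] using diff_mem' p n hp hp5 hn u 1
      | neg x hx =>
        have := (A p n).neg_mem hx
        have he : -FreeAbelianGroup.of x -
            (deg p n (-FreeAbelianGroup.of x)) • FreeAbelianGroup.of (cls p n 1) =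
            -(FreeAbelianGroup.of x -
              (deg p n (FreeAbelianGroup.of x)) • FreeAbelianGroup.of (cls p n 1)) := by
          rw [map_neg, neg_smul]; abel
        rwa [he]
      | add x y hx hy =>
        have := (A p n).add_mem hx hy
        have he : (x + y) - (deg p n (x + y)) • FreeAbelianGroup.of (cls p n 1) =
            (x - (deg p n x) • FreeAbelianGroup.of (cls p n 1)) +
            (y - (deg p n y) • FreeAbelianGroup.of (cls p n 1)) := by
          rw [map_add, add_smul]; abel
        rwa [he]
    obtain ⟨c, hc⟩ := hdvd
    have hmul : (deg p n z) • FreeAbelianGroup.of (cls p n 1) ∈ A p n := by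
      rw [hc, mul_comm, mul_smul]
      exact (A p n).zsmul_mem (three_mem p n hp hp5 hn) c
    have := (A p n).add_mem (hP z) hmul
    rwa [sub_add_cancel] at this

end Stmt9
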